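/- arXiv:2101.06659 — 2 statements merged into one kernel-verified Lean document; each statement's English description precedes it below -/
import Mathlib

section
/- Let X be a Banach space and g ∈ L^∞_{w*}(ℝ, X*) (weak-* measurable with ess sup ‖g‖ < ∞). Suppose that sup_{h ∈ B_{L¹(ℝ,X)}} |∫ ⟨g(ω+t) − g(ω), h(ω)⟩ dω| → 0 as t → 0 (i.e., g belongs to the sun-dual of the translation semigroup on L¹(ℝ, X)). Then for every z ∈ X, the scalar function ω ↦ ⟨g(ω), z⟩ agrees a.e. with a bounded uniformly continuous function on ℝ. -/
open MeasureTheory Filter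

/-- Duality: if `|∫ v φ| ≤ ε ∫|φ|` for all integrable `φ`, then `|v| ≤ ε` a.e. -/
lemma ae_abs_le_of_dual {v : ℝ → ℝ} (hv : Measurable v) {M : ℝ}
    (hbd : ∀ᵐ ω ∂(volume : Measure ℝ), |v ω| ≤ M) {ε : ℝ}
    (h : ∀ φ : ℝ → ℝ, Integrable φ volume → |∫ ω, v ω * φ ω| ≤ ε * ∫ ω, |φ ω|) :
    ∀ᵐ ω ∂(volume : Measure ℝ), |v ω| ≤ ε := by
  have hint : ∀ s : Set ℝ, MeasurableSet s → volume s < ⊤ → IntegrableOn v s volume := by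
    intro s hs hfin
    have : IsFiniteMeasure ((volume : Measure ℝ).restrict s) :=
      ⟨by rwa [Measure.restrict_apply_univ]⟩
    exact Integrable.mono' (integrable_const M) hv.aestronglyMeasurable.restrict
      (ae_restrict_of_ae (hbd.mono fun ω hω => by simpa using hω))
  have key : ∀ s : Set ℝ, MeasurableSet s → volume s < ⊤ →
      |∫ x in s, v x| ≤ ε * (volume s).toReal := by
    intro s hs hfin
    have hφ : Integrable (s.indicator (fun _ => (1 : ℝ))) volume :=
      (integrable_indicator_iff hs).2 (integrableOn_const hfin.ne)
    have h1 := h _ hφ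
    have e1 : (fun ω => v ω * s.indicator (fun _ => (1 : ℝ)) ω) = s.indicator v := by
      funext ω
      by_cases hω : ω ∈ s <;> simp [Set.indicator_of_mem, Set.indicator_of_notMem, hω]
    have e2 : (fun ω => |s.indicator (fun _ => (1 : ℝ)) ω|) = s.indicator (fun _ => (1 : ℝ)) := by
      funext ω
      by_cases hω : ω ∈ s <;> simp [Set.indicator_of_mem, Set.indicator_of_notMem, hω]
    rw [e1] at h1
    rw [show (∫ ω, |s.indicator (fun _ => (1:ℝ)) ω|) = ∫ ω, s.indicator (fun _ => (1:ℝ)) ω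
        from congrArg _ e2] at h1
    rw [integral_indicator hs, integral_indicator_const (1 : ℝ) hs] at h1
    have h1' : |∫ x in s, v x| ≤ ε * volume.real s := by simpa using h1
    exact h1'
  have h1 : ∀ᵐ ω ∂(volume : Measure ℝ), 0 ≤ ε - v ω := by
    apply ae_nonneg_of_forall_setIntegral_nonneg_of_sigmaFinite
    · intro s hs hfin
      exact (integrableOn_const hfin.ne).sub (hint s hs hfin)
    · intro s hs hfin
      rw [integral_sub (integrableOn_const (C := ε) hfin.ne) (hint s hs hfin),
        setIntegral_const]
      have := (abs_le.1 (key s hs hfin)).2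
      simp only [smul_eq_mul]
      rw [show volume.real s = (volume s).toReal from rfl]
      linarith
  have h2 : ∀ᵐ ω ∂(volume : Measure ℝ), 0 ≤ v ω + ε := by
    apply ae_nonneg_of_forall_setIntegral_nonneg_of_sigmaFinite
    · intro s hs hfin
      exact (hint s hs hfin).add (integrableOn_const hfin.ne)
    · intro s hs hfin
      rw [integral_add (hint s hs hfin) (integrableOn_const (C := ε) hfin.ne),
        setIntegral_const]
      have := (abs_le.1 (key s hs hfin)).1
      simp only [smul_eq_mul]
      rw [show volume.real s = (volume s).toReal from rfl]
      linarith
  filter_upwards [h1, h2] with ω hω1 hω2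
  rw [abs_le]; constructor <;> linarith

/-- A continuous function bounded a.e. (w.r.t. volume) is bounded everywhere. -/
lemma abs_le_of_ae_abs_le {v : ℝ → ℝ} (hv : Continuous v) {c : ℝ}
    (h : ∀ᵐ ω ∂(volume : Measure ℝ), |v ω| ≤ c) : ∀ ω, |v ω| ≤ c := by
  intro x
  by_contra hx
  push_neg at hx
  have hU : IsOpen {ω : ℝ | c < |v ω|} := isOpen_lt continuous_const hv.abs
  have hnull : (volume : Measure ℝ) {ω : ℝ | c < |v ω|} = 0 := by
    have := h
    rw [ae_iff] at this
    refine measure_mono_null (fun ω hω => ?_) this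
    exact not_le.2 hω
  exact absurd hnull (ne_of_gt (hU.measure_pos volume ⟨x, hx⟩))

theorem stmt13 {X : Type*} [NormedAddCommGroup X] [NormedSpace ℝ X]
    (g : ℝ → (X →L[ℝ] ℝ)) (C : ℝ)
    (hgmeas : ∀ x : X, Measurable fun ω => g ω x)
    (hgbound : ∀ᵐ ω ∂(volume : Measure ℝ), ‖g ω‖ ≤ C)
    (hsun : ∀ ε > (0 : ℝ), ∃ δ > (0 : ℝ), ∀ t : ℝ, |t| < δ →
      ∀ h : ℝ → X, Integrable h volume → (∫ ω, ‖h ω‖) ≤ 1 →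
        |∫ ω, (g (ω + t) (h ω) - g ω (h ω))| ≤ ε) :
    ∀ z : X, ∃ u : ℝ → ℝ, UniformContinuous u ∧ (∃ K, ∀ ω, |u ω| ≤ K) ∧
      ∀ᵐ ω ∂(volume : Measure ℝ), g ω z = u ω := by
  intro z
  obtain ⟨ω₀, hω₀⟩ := hgbound.exists
  have hC : 0 ≤ C := le_trans (norm_nonneg _) hω₀
  set f : ℝ → ℝ := fun ω => g ω z with hfdef
  have hfm : Measurable f := hgmeas z
  set M : ℝ := C * ‖z‖ with hMdef
  have hM0 : 0 ≤ M := mul_nonneg hC (norm_nonneg z)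
  have hfb : ∀ᵐ ω ∂(volume : Measure ℝ), |f ω| ≤ M := by
    filter_upwards [hgbound] with ω hω
    calc |f ω| = ‖g ω z‖ := (Real.norm_eq_abs _).symm
      _ ≤ ‖g ω‖ * ‖z‖ := (g ω).le_opNorm z
      _ ≤ C * ‖z‖ := mul_le_mul_of_nonneg_right hω (norm_nonneg z)
  have htrans : ∀ t : ℝ, ∀ᵐ ω ∂(volume : Measure ℝ), |f (ω + t)| ≤ M := fun t =>
    (measurePreserving_add_right volume t).quasiMeasurePreserving.ae hfb
  -- scaled version of hsun
  have hsun' : ∀ ε > (0 : ℝ), ∃ δ > (0 : ℝ), ∀ t : ℝ, |t| < δ →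
      ∀ h : ℝ → X, Integrable h volume →
        |∫ ω, (g (ω + t) (h ω) - g ω (h ω))| ≤ ε * ∫ ω, ‖h ω‖ := by
    intro ε hε
    obtain ⟨δ, hδ, H⟩ := hsun ε hε
    refine ⟨δ, hδ, fun t ht h hint => ?_⟩
    set I := ∫ ω, ‖h ω‖ with hIdef
    have hI0 : 0 ≤ I := integral_nonneg fun ω => norm_nonneg _
    rcases eq_or_lt_of_le hI0 with hI0' | hI0'
    · have h0 : ∀ᵐ ω ∂(volume : Measure ℝ), h ω = 0 := by
        have hnz := (integral_eq_zero_iff_of_nonneg (fun ω => norm_nonneg (h ω)) hint.norm).mp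
          hI0'.symm
        filter_upwards [hnz] with ω hω
        exact norm_eq_zero.mp hω
      have hz : ∫ ω, (g (ω + t) (h ω) - g ω (h ω)) = 0 := by
        rw [integral_eq_zero_of_ae]
        filter_upwards [h0] with ω hω
        simp [hω]
      rw [hz, ← hI0']
      simp
    · set h' : ℝ → X := fun ω => I⁻¹ • h ω with hh'def
      have hint' : Integrable h' volume := hint.smul I⁻¹
      have hle1 : (∫ ω, ‖h' ω‖) ≤ 1 := by
        have : (∫ ω, ‖h' ω‖) = I⁻¹ * I := by
          simp only [hh'def, norm_smul, norm_inv, Real.norm_eq_abs, abs_of_pos hI0']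
          rw [integral_const_mul]
        rw [this, inv_mul_cancel₀ (ne_of_gt hI0')]
      have hH := H t ht h' hint' hle1
      have heq : (fun ω => g (ω + t) (h' ω) - g ω (h' ω)) =
          fun ω => I⁻¹ * (g (ω + t) (h ω) - g ω (h ω)) := by
        funext ω
        simp only [hh'def, _root_.map_smul, smul_eq_mul]
        ring
      rw [heq, integral_const_mul, abs_mul, abs_inv, abs_of_pos hI0'] at hH
      calc |∫ ω, (g (ω + t) (h ω) - g ω (h ω))|
          = I * (I⁻¹ * |∫ ω, (g (ω + t) (h ω) - g ω (h ω))|) := by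
            rw [← mul_assoc, mul_inv_cancel₀ (ne_of_gt hI0'), one_mul]
        _ ≤ I * ε := by
            apply mul_le_mul_of_nonneg_left hH (le_of_lt hI0')
        _ = ε * I := mul_comm _ _
  -- key a.e. translation estimate for f
  have keyA : ∀ ε > (0 : ℝ), ∃ δ > (0 : ℝ), ∀ t : ℝ, |t| < δ →
      ∀ᵐ ω ∂(volume : Measure ℝ), |f (ω + t) - f ω| ≤ ε := by
    intro ε hε
    have hε' : 0 < ε / (‖z‖ + 1) := div_pos hε (by positivity)
    obtain ⟨δ, hδ, H⟩ := hsun' _ hε'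
    refine ⟨δ, hδ, fun t ht => ?_⟩
    have hvm : Measurable fun ω => f (ω + t) - f ω :=
      (hfm.comp (measurable_add_const t)).sub hfm
    have hvb : ∀ᵐ ω ∂(volume : Measure ℝ), |f (ω + t) - f ω| ≤ M + M := by
      filter_upwards [hfb, htrans t] with ω h1 h2
      calc |f (ω + t) - f ω| ≤ |f (ω + t)| + |f ω| := abs_sub _ _
        _ ≤ M + M := add_le_add h2 h1
    apply ae_abs_le_of_dual hvm hvb
    intro φ hφ
    have hH := H t ht (fun ω => φ ω • z) (hφ.smul_const z)
    have e1 : (fun ω => g (ω + t) (φ ω • z) - g ω (φ ω • z)) =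
        fun ω => (f (ω + t) - f ω) * φ ω := by
      funext ω
      simp only [_root_.map_smul, smul_eq_mul, hfdef]
      ring
    have e2 : (∫ ω, ‖φ ω • z‖) = ‖z‖ * ∫ ω, |φ ω| := by
      simp only [norm_smul, Real.norm_eq_abs]
      rw [integral_mul_const, mul_comm]
    rw [e1, e2] at hH
    have hφint : 0 ≤ ∫ ω, |φ ω| := integral_nonneg fun ω => abs_nonneg _
    calc |∫ ω, (f (ω + t) - f ω) * φ ω| ≤ ε / (‖z‖ + 1) * (‖z‖ * ∫ ω, |φ ω|) := hH
      _ ≤ ε * ∫ ω, |φ ω| := by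
        rw [← mul_assoc]
        apply mul_le_mul_of_nonneg_right _ hφint
        calc ε / (‖z‖ + 1) * ‖z‖ ≤ ε / (‖z‖ + 1) * (‖z‖ + 1) :=
              mul_le_mul_of_nonneg_left (by linarith) (le_of_lt hε')
          _ = ε := div_mul_cancel₀ ε (by positivity)
  -- local integrability of f
  have hIOn : ∀ s : Set ℝ, MeasurableSet s → volume s < ⊤ → IntegrableOn f s volume := by
    intro s hs hfin
    have : IsFiniteMeasure ((volume : Measure ℝ).restrict s) :=
      ⟨by rwa [Measure.restrict_apply_univ]⟩
    exact Integrable.mono' (integrable_const M) hfm.aestronglyMeasurable.restrict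
      (ae_restrict_of_ae (hfb.mono fun ω hω => by simpa using hω))
  have hfi : ∀ a b : ℝ, IntervalIntegrable f volume a b := fun a b =>
    ⟨hIOn _ measurableSet_Ioc measure_Ioc_lt_top, hIOn _ measurableSet_Ioc measure_Ioc_lt_top⟩
  -- the averaged functions
  set uc : ℝ → ℝ → ℝ := fun c x => c⁻¹ * ∫ t in x..(x + c), f t with hucdef
  have hmem : ∀ a b : ℝ, |∫ t in a..b, f t| ≤ M * |b - a| := by
    intro a b
    rw [← Real.norm_eq_abs]
    apply intervalIntegral.norm_integral_le_of_norm_le_const_ae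
    filter_upwards [hfb] with x hx _
    simpa using hx
  have hucb : ∀ c : ℝ, 0 < c → ∀ x, |uc c x| ≤ M := by
    intro c hc x
    rw [hucdef]
    simp only []
    rw [abs_mul, abs_inv, abs_of_pos hc]
    calc c⁻¹ * |∫ t in x..(x + c), f t| ≤ c⁻¹ * (M * |x + c - x|) :=
          mul_le_mul_of_nonneg_left (hmem _ _) (by positivity)
      _ = M := by
          rw [show x + c - x = c by ring, abs_of_pos hc]
          field_simp
  have hucL : ∀ c : ℝ, 0 < c → LipschitzWith (Real.toNNReal (c⁻¹ * (M + M))) (uc c) := by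
    intro c hc
    apply LipschitzWith.of_dist_le_mul
    intro x y
    rw [Real.dist_eq, Real.dist_eq]
    have key2 : (∫ t in x..(x + c), f t) - ∫ t in y..(y + c), f t
        = (∫ t in (y + c)..(x + c), f t) - ∫ t in y..x, f t := by
      have h1 := intervalIntegral.integral_add_adjacent_intervals (hfi y (y + c))
        (hfi (y + c) (x + c))
      have h2 := intervalIntegral.integral_add_adjacent_intervals (hfi y x) (hfi x (x + c))
      linarith
    have e3 : uc c x - uc c y = c⁻¹ * ((∫ t in (y + c)..(x + c), f t) - ∫ t in y..x, f t) := by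
      rw [hucdef]
      simp only []
      rw [← mul_sub, key2]
    rw [e3, abs_mul, abs_inv, abs_of_pos hc]
    have b1 := hmem (y + c) (x + c)
    have b2 := hmem y x
    rw [show x + c - (y + c) = x - y by ring] at b1
    have hb : |(∫ t in (y + c)..(x + c), f t) - ∫ t in y..x, f t| ≤ M * |x - y| + M * |x - y| :=
      calc |(∫ t in (y + c)..(x + c), f t) - ∫ t in y..x, f t|
          ≤ |∫ t in (y + c)..(x + c), f t| + |∫ t in y..x, f t| := abs_sub _ _
        _ ≤ M * |x - y| + M * |x - y| := add_le_add b1 b2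
    calc c⁻¹ * |(∫ t in (y + c)..(x + c), f t) - ∫ t in y..x, f t|
        ≤ c⁻¹ * (M * |x - y| + M * |x - y|) :=
          mul_le_mul_of_nonneg_left hb (by positivity)
      _ = (Real.toNNReal (c⁻¹ * (M + M)) : ℝ) * |x - y| := by
          rw [Real.coe_toNNReal _ (mul_nonneg (inv_nonneg.2 hc.le) (by linarith))]
          ring
  -- a.e. closeness of the averages to f
  have close : ∀ ε > (0 : ℝ), ∃ c > (0 : ℝ),
      ∀ᵐ ω ∂(volume : Measure ℝ), |uc c ω - f ω| ≤ ε := by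
    intro ε hε
    obtain ⟨δ, hδ, H⟩ := keyA ε hε
    refine ⟨δ / 2, by positivity, ?_⟩
    set c := δ / 2 with hcdef
    have hc : 0 < c := by positivity
    set ν := (volume : Measure ℝ).restrict (Set.Ioc (0 : ℝ) c) with hν
    have hmeasset : MeasurableSet {x : ℝ × ℝ | |f (x.2 + x.1) - f x.2| ≤ ε} := by
      apply measurableSet_le
      · exact ((hfm.comp (measurable_snd.add measurable_fst)).sub (hfm.comp measurable_snd)).abs
      · exact measurable_const
    have h1 : ∀ᵐ s ∂ν, ∀ᵐ ω ∂(volume : Measure ℝ), |f (ω + s) - f ω| ≤ ε := by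
      rw [hν, ae_restrict_iff' measurableSet_Ioc]
      apply Eventually.of_forall
      intro s hs
      apply H
      rw [abs_of_pos hs.1]
      calc s ≤ c := hs.2
        _ < δ := by rw [hcdef]; linarith
    have h2 := (Measure.ae_ae_comm hmeasset).1 h1
    filter_upwards [h2] with ω hω
    have hii : IntervalIntegrable (fun s => f (s + ω)) volume 0 c := by
      have := (hfi ω (c + ω)).comp_add_right ω
      simpa using this
    have hchg : ∫ t in ω..(ω + c), f t = ∫ s in (0 : ℝ)..c, f (s + ω) := by
      rw [intervalIntegral.integral_comp_add_right f ω]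
      rw [show (0 : ℝ) + ω = ω by ring, show c + ω = ω + c by ring]
    have hsub : uc c ω - f ω = c⁻¹ * ∫ s in (0 : ℝ)..c, (f (s + ω) - f ω) := by
      rw [intervalIntegral.integral_sub hii (intervalIntegrable_const),
        intervalIntegral.integral_const]
      rw [hucdef]
      simp only []
      rw [hchg]
      rw [show (c - 0) • f ω = c * f ω by simp [smul_eq_mul]]
      field_simp
    rw [hsub, abs_mul, abs_inv, abs_of_pos hc]
    have hae2 : ∀ᵐ s ∂(volume : Measure ℝ), s ∈ Set.Ioc (0 : ℝ) c →
        |f (ω + s) - f ω| ≤ ε := by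
      rw [← ae_restrict_iff' measurableSet_Ioc]
      exact hω
    have hb : |∫ s in (0 : ℝ)..c, (f (s + ω) - f ω)| ≤ ε * |c - 0| := by
      rw [← Real.norm_eq_abs]
      apply intervalIntegral.norm_integral_le_of_norm_le_const_ae
      filter_upwards [hae2] with s hs hmem2
      rw [Set.uIoc_of_le hc.le] at hmem2
      rw [Real.norm_eq_abs, add_comm s ω]
      exact hs hmem2
    rw [sub_zero, abs_of_pos hc] at hb
    calc c⁻¹ * |∫ s in (0 : ℝ)..c, (f (s + ω) - f ω)| ≤ c⁻¹ * (ε * c) :=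
          mul_le_mul_of_nonneg_left hb (by positivity)
      _ = ε := by field_simp
  -- choose a sequence of averages
  have seq : ∀ n : ℕ, ∃ c > (0 : ℝ),
      ∀ᵐ ω ∂(volume : Measure ℝ), |uc c ω - f ω| ≤ 1 / (n + 1) := fun n =>
    close _ (by positivity)
  choose cs hcs hcsae using seq
  set un : ℕ → ℝ → ℝ := fun n => uc (cs n) with hundef
  have hae : ∀ᵐ ω ∂(volume : Measure ℝ), ∀ n : ℕ, |un n ω - f ω| ≤ 1 / (n + 1) :=
    (ae_all_iff).2 hcsae
  have hdiff : ∀ n m : ℕ, ∀ x, |un n x - un m x| ≤ 1 / (n + 1) + 1 / (m + 1) := by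
    intro n m
    apply abs_le_of_ae_abs_le (((hucL _ (hcs n)).continuous).sub ((hucL _ (hcs m)).continuous))
    filter_upwards [hcsae n, hcsae m] with ω h1 h2
    calc |un n ω - un m ω| = |(un n ω - f ω) - (un m ω - f ω)| := by ring_nf
      _ ≤ |un n ω - f ω| + |un m ω - f ω| := abs_sub _ _
      _ ≤ 1 / (n + 1) + 1 / (m + 1) := add_le_add h1 h2
  have hcauchy : ∀ x, CauchySeq fun n => un n x := by
    intro x
    refine cauchySeq_of_le_tendsto_0 (fun N : ℕ => 1 / (N + 1) + 1 / (N + 1))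
      (fun n m N hn hm => ?_) ?_
    · rw [Real.dist_eq]
      have e1 : (1 : ℝ) / (n + 1) ≤ 1 / (N + 1) := by
        apply one_div_le_one_div_of_le (by positivity)
        have := (Nat.cast_le (α := ℝ)).2 hn
        linarith
      have e2 : (1 : ℝ) / (m + 1) ≤ 1 / (N + 1) := by
        apply one_div_le_one_div_of_le (by positivity)
        have := (Nat.cast_le (α := ℝ)).2 hm
        linarith
      calc |un n x - un m x| ≤ 1 / (n + 1) + 1 / (m + 1) := hdiff n m x
        _ ≤ 1 / (N + 1) + 1 / (N + 1) := add_le_add e1 e2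
    · have := tendsto_one_div_add_atTop_nhds_zero_nat (𝕜 := ℝ)
      simpa using this.add this
  set u : ℝ → ℝ := fun x => limUnder atTop fun n => un n x with hudef
  have hu : ∀ x, Tendsto (fun n => un n x) atTop (nhds (u x)) := fun x =>
    (hcauchy x).tendsto_limUnder
  have hlim : ∀ n : ℕ, ∀ x, |u x - un n x| ≤ 1 / (n + 1) := by
    intro n x
    have hd : Tendsto (fun m => dist (un m x) (un n x)) atTop
        (nhds (dist (u x) (un n x))) := (hu x).dist tendsto_const_nhds
    have hg : Tendsto (fun m : ℕ => 1 / (m + 1 : ℝ) + 1 / (n + 1 : ℝ)) atTop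
        (nhds (0 + 1 / (n + 1 : ℝ))) :=
      tendsto_one_div_add_atTop_nhds_zero_nat.add tendsto_const_nhds
    have hfin := le_of_tendsto_of_tendsto hd hg (Eventually.of_forall fun m => by
      simpa [Real.dist_eq] using hdiff m n x)
    rw [Real.dist_eq] at hfin
    simpa using hfin
  refine ⟨u, ?_, ⟨M, ?_⟩, ?_⟩
  · -- uniform continuity
    rw [Metric.uniformContinuous_iff]
    intro ε hε
    obtain ⟨n, hn⟩ := exists_nat_one_div_lt (show (0 : ℝ) < ε / 4 by linarith)
    obtain ⟨δ, hδ, hδ2⟩ := Metric.uniformContinuous_iff.1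
      ((hucL _ (hcs n)).uniformContinuous) (ε / 2) (by linarith)
    refine ⟨δ, hδ, fun {x y} hxy => ?_⟩
    have h3 := hδ2 hxy
    have h4 := hlim n x
    have h5 := hlim n y
    rw [Real.dist_eq] at h3 ⊢
    have : |u x - u y| ≤ |u x - un n x| + |un n x - un n y| + |un n y - u y| := by
      have : u x - u y = (u x - un n x) + (un n x - un n y) + (un n y - u y) := by ring
      rw [this]
      exact (abs_add_three _ _ _)
    rw [abs_sub_comm (un n y) (u y)] at this
    have h8 : (1 : ℝ) / (n + 1) < ε / 4 := hn
    linarith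
  · -- boundedness
    intro x
    have : Tendsto (fun n => |un n x|) atTop (nhds |u x|) := (hu x).abs
    exact le_of_tendsto this (Eventually.of_forall fun n => hucb _ (hcs n) x)
  · -- a.e. equality
    filter_upwards [hae] with ω hω
    have h1 : Tendsto (fun n => un n ω) atTop (nhds (f ω)) := by
      rw [tendsto_iff_dist_tendsto_zero]
      apply squeeze_zero (fun n => dist_nonneg) (fun n => ?_)
        tendsto_one_div_add_atTop_nhds_zero_nat
      rw [Real.dist_eq]
      exact hω n
    exact tendsto_nhds_unique h1 (hu ω)
end

section
/- Let X be a Banach space and g: ℝ → X* a bounded function such that for every null sequence (t_n) one has sup_{z ∈ B_X} sup_{h ∈ B_{L¹(ℝ)}} ∫ |⟨g(ω + t_n) − g(ω), z⟩| h(ω) dω → 0 and moreover sup_{h ∈ B_{L¹(ℝ,X)}} ∫ |⟨g(ω + t_n), h(ω)⟩ − ⟨g(ω), h(ω)⟩| dω → 0. If additionally ω ↦ ⟨g(ω), z⟩ is continuous for each z ∈ X, then g: ℝ → X* is norm continuous. -/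
open MeasureTheory Filter

theorem stmt14 {X : Type*} [NormedAddCommGroup X] [NormedSpace ℝ X]
    (g : ℝ → (X →L[ℝ] ℝ)) (C : ℝ) (hgbound : ∀ t, ‖g t‖ ≤ C)
    (h1 : ∀ t : ℕ → ℝ, Tendsto t atTop (nhds 0) →
      ∀ ε > (0 : ℝ), ∃ N : ℕ, ∀ n ≥ N, ∀ z : X, ‖z‖ ≤ 1 →
        ∀ h : ℝ → ℝ, Integrable h volume → (∫ ω, |h ω|) ≤ 1 →
          (∫ ω, |g (ω + t n) z - g ω z| * |h ω|) ≤ ε)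
    (h2 : ∀ t : ℕ → ℝ, Tendsto t atTop (nhds 0) →
      ∀ ε > (0 : ℝ), ∃ N : ℕ, ∀ n ≥ N,
        ∀ h : ℝ → X, Integrable h volume → (∫ ω, ‖h ω‖) ≤ 1 →
          (∫ ω, |g (ω + t n) (h ω) - g ω (h ω)|) ≤ ε)
    (hcont : ∀ z : X, Continuous fun ω => g ω z) :
    Continuous g := by
  rw [continuous_iff_continuousAt]
  intro t₀
  by_contra hc
  rw [Metric.continuousAt_iff] at hc
  push_neg at hc
  obtain ⟨ε, hε, hεc⟩ := hc
  have hseq : ∀ n : ℕ, ∃ s : ℝ, dist s t₀ < 1 / (n + 1) ∧ ε ≤ dist (g s) (g t₀) :=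
    fun n => hεc (1 / (n + 1)) (by positivity)
  choose s hs1 hs2 using hseq
  set t : ℕ → ℝ := fun n => s n - t₀ with ht
  have htend : Tendsto t atTop (nhds 0) := by
    refine squeeze_zero_norm (fun n => ?_) tendsto_one_div_add_atTop_nhds_zero_nat
    have := (hs1 n).le
    rwa [Real.dist_eq] at this
  obtain ⟨N, hN⟩ := h2 t htend (ε / 4) (by positivity)
  have hn : ε ≤ ‖g (s N) - g t₀‖ := by
    have := hs2 N
    rwa [dist_eq_norm] at this
  have hlt : ε / 2 < ‖g (s N) - g t₀‖ := lt_of_lt_of_le (by linarith) hn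
  obtain ⟨z, hz1, hz2⟩ := ContinuousLinearMap.exists_lt_apply_of_lt_opNorm _ hlt
  set f : ℝ → ℝ := fun ω => g (ω + t N) z - g ω z with hf
  have hfc : Continuous f := ((hcont z).comp (continuous_id.add continuous_const)).sub (hcont z)
  have hft₀ : ε / 2 < |f t₀| := by
    have hst : t₀ + t N = s N := by simp [ht]
    have : f t₀ = (g (s N) - g t₀) z := by
      simp [hf, hst, ContinuousLinearMap.sub_apply]
    rw [this]
    simpa using hz2
  -- find a ball on which |f| > ε/2
  have hopen : IsOpen {ω : ℝ | ε / 2 < |f ω|} := isOpen_lt continuous_const hfc.abs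
  obtain ⟨δ, hδ, hball⟩ := Metric.isOpen_iff.1 hopen t₀ hft₀
  set S : Set ℝ := Metric.ball t₀ δ with hS
  have hSm : MeasurableSet S := measurableSet_ball
  have hSvol : volume S = ENNReal.ofReal (2 * δ) := by
    rw [hS, Real.volume_ball]
  have hSvtop : volume S ≠ ⊤ := by rw [hSvol]; exact ENNReal.ofReal_ne_top
  have hSvr : (volume S).toReal = 2 * δ := by
    rw [hSvol, ENNReal.toReal_ofReal (by linarith)]
  set c : ℝ := (2 * δ)⁻¹ with hc'
  have hcpos : 0 < c := by positivity
  set h : ℝ → X := S.indicator (fun _ => c • z) with hh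
  have hint : Integrable h volume := by
    rw [hh]
    exact (integrable_indicator_iff hSm).2 (integrableOn_const (by
      rw [hSvol]; exact ENNReal.ofReal_ne_top))
  have hnorm1 : (∫ ω, ‖h ω‖) ≤ 1 := by
    have : (fun ω => ‖h ω‖) = S.indicator (fun _ => ‖c • z‖) := by
      funext ω
      rw [hh]
      exact norm_indicator_eq_indicator_norm _ ω
    rw [this, integral_indicator hSm, setIntegral_const, smul_eq_mul, measureReal_def, hSvr]
    rw [norm_smul, Real.norm_eq_abs, abs_of_pos hcpos]
    have : 2 * δ * (c * ‖z‖) = ‖z‖ := by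
      rw [hc', ← mul_assoc, mul_inv_cancel₀ (by positivity), one_mul]
    rw [this]
    exact hz1.le
  -- identify the integrand
  have hG : (fun ω => |g (ω + t N) (h ω) - g ω (h ω)|)
      = S.indicator (fun ω => c * |f ω|) := by
    funext ω
    by_cases hω : ω ∈ S
    · rw [hh]
      simp only [Set.indicator_of_mem hω]
      rw [ContinuousLinearMap.map_smul, ContinuousLinearMap.map_smul, smul_eq_mul, smul_eq_mul, ← mul_sub, abs_mul,
        abs_of_pos hcpos]
    · rw [hh]
      simp [Set.indicator_of_notMem hω]
  have hIntS : IntegrableOn (fun ω => c * |f ω|) S volume := by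
    have : IntegrableOn (fun ω => c * |f ω|) (Set.Icc (t₀ - δ) (t₀ + δ)) volume :=
      (continuous_const.mul hfc.abs).integrableOn_Icc
    apply this.mono_set
    rw [hS, Real.ball_eq_Ioo]
    exact Set.Ioo_subset_Icc_self
  have hlow : ε / 2 ≤ ∫ ω, |g (ω + t N) (h ω) - g ω (h ω)| := by
    rw [hG, integral_indicator hSm]
    have hle : ∀ x ∈ S, c * (ε / 2) ≤ c * |f x| := by
      intro x hx
      exact mul_le_mul_of_nonneg_left (hball hx).le hcpos.le
    have := setIntegral_ge_of_const_le_real hSm hSvtop hle hIntS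
    rw [measureReal_def, hSvr] at this
    calc ε / 2 = c * (ε / 2) * (2 * δ) := by rw [mul_comm c, mul_assoc, hc', inv_mul_cancel₀ (by positivity), mul_one]
      _ ≤ _ := this
  have hup := hN N le_rfl h hint hnorm1
  linarith
end
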